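/- Let V be a real vector space, F : V → V a linear map, and v ∈ V such that the vectors v and F(v) are linearly independent. If the bracket [ψ,φ]_{F,v} = φ(v)·F*(ψ) − ψ(v)·F*(φ) satisfies the Jacobi identity for all ψ, φ, ζ ∈ V*, then F*(ψ) = 0 for every ψ ∈ V* with ψ(v) = 0 and ψ(F(v)) = 0. -/

import Mathlib

/-- The bracket on the dual space `V*` associated with a linear map `F : V → V` and a
vector `v ∈ V`: `[ψ,φ]_{F,v} = φ(v)·F*(ψ) − ψ(v)·F*(φ)`. -/
noncomputable def dualBracket {V : Type*} [AddCommGroup V] [Module ℝ V]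
    (F : V →ₗ[ℝ] V) (v : V) (ψ φ : Module.Dual ℝ V) : Module.Dual ℝ V :=
  φ v • F.dualMap ψ - ψ v • F.dualMap φ

/-- If `v` and `F(v)` are linearly independent and `[·,·]_{F,v}` satisfies the Jacobi
identity, then `F*(ψ) = 0` for every `ψ ∈ V*` vanishing on `v` and on `F(v)`. -/
theorem dualBracket_jacobi_linearIndependent {V : Type*} [AddCommGroup V] [Module ℝ V]
    (F : V →ₗ[ℝ] V) (v : V) (hli : LinearIndependent ℝ ![v, F v])
    (hJ : ∀ ψ φ ζ : Module.Dual ℝ V,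
        dualBracket F v (dualBracket F v ψ φ) ζ +
          dualBracket F v (dualBracket F v ζ ψ) φ +
          dualBracket F v (dualBracket F v φ ζ) ψ = 0) :
    ∀ ψ : Module.Dual ℝ V, ψ v = 0 → ψ (F v) = 0 → F.dualMap ψ = 0 := by
  intro ψ hv hF
  have hne : v ≠ F v := by
    intro h
    have h01 : (![v, F v] : Fin 2 → V) 0 = ![v, F v] 1 := by
      simp only [Matrix.cons_val_zero, Matrix.cons_val_one, Matrix.head_cons]; exact h
    exact absurd (hli.injective h01) (by decide)
  have hsub := (linearIndepOn_id_range_iff hli.injective).mpr hli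
  let b := Module.Basis.extend hsub
  have hmemv : v ∈ hsub.extend (Set.subset_univ _) :=
    hsub.subset_extend _ ⟨0, by simp⟩
  have hmemF : (F v) ∈ hsub.extend (Set.subset_univ _) :=
    hsub.subset_extend _ ⟨1, by simp⟩
  set φ := b.coord ⟨v, hmemv⟩ with hφ
  set ζ := b.coord ⟨F v, hmemF⟩ with hζ
  have bv : b ⟨v, hmemv⟩ = v := Module.Basis.extend_apply_self _ _
  have bF : b ⟨F v, hmemF⟩ = F v := Module.Basis.extend_apply_self _ _
  have hneidx : (⟨v, hmemv⟩ : hsub.extend (Set.subset_univ _)) ≠ ⟨F v, hmemF⟩ := by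
    simp [Subtype.ext_iff, hne]
  have φv : φ v = 1 := by
    have : φ (b ⟨v, hmemv⟩) = 1 := by simp [hφ]
    rwa [bv] at this
  have φF : φ (F v) = 0 := by
    have : φ (b ⟨F v, hmemF⟩) = 0 := by
      simp [hφ, Module.Basis.coord_apply, Module.Basis.repr_self_apply, hneidx.symm]
    rwa [bF] at this
  have ζv : ζ v = 0 := by
    have : ζ (b ⟨v, hmemv⟩) = 0 := by
      simp [hζ, Module.Basis.coord_apply, Module.Basis.repr_self_apply, hneidx]
    rwa [bv] at this
  have ζF : ζ (F v) = 1 := by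
    have : ζ (b ⟨F v, hmemF⟩) = 1 := by simp [hζ]
    rwa [bF] at this
  have h := hJ ψ φ ζ
  simp only [dualBracket, map_sub, map_smul, LinearMap.dualMap_apply, smul_eq_mul,
    LinearMap.sub_apply, LinearMap.smul_apply, hv, hF, φv, φF, ζv, ζF] at h
  simpa using h
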